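/- Let f(z) = ∑_{n≥1} a_n zⁿ be analytic on 𝔻 with f(0) = 0 and sup_{z∈𝔻} |f′(z)| ≤ 1. Then for every 0 ≤ r ≤ 0.872664 one has ∑_{n≥1} |a_n| rⁿ ≤ 1. (Hence the Bohr radius of the pair (differentiation, identity) is at least 0.872664, the root of ∑_{n≥1} r^{2n}/n² = 1 being 0.872664… .) -/

import Mathlib

open Metric Filter

section BohrAux

open MeasureTheory Complex FormalMultilinearSeries AddCircle
open scoped Real Topology ENNReal

noncomputable section


lemma ofScalars_coeff (A : ℕ → ℂ) (n : ℕ) : (ofScalars ℂ A).coeff n = A n := by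
  show (ofScalars ℂ A n) (fun _ => 1) = A n
  rw [ofScalars_apply_eq]; simp

lemma radius_ge (A : ℕ → ℂ) (f : ℂ → ℂ)
    (hrep : ∀ z ∈ Metric.ball (0 : ℂ) 1, HasSum (fun n : ℕ => A n * z ^ n) (f z)) :
    1 ≤ (ofScalars ℂ A).radius := by
  apply ENNReal.le_of_forall_nnreal_lt
  intro r hr
  have hr1 : (r : ℝ) < 1 := by exact_mod_cast hr
  have hz : ((r : ℝ) : ℂ) ∈ Metric.ball (0:ℂ) 1 := by
    simp [Complex.norm_of_nonneg r.coe_nonneg, hr1]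
  have hs := (hrep _ hz).summable.tendsto_atTop_zero
  have key : ∀ n : ℕ, ‖A n * ((r:ℝ):ℂ) ^ n‖ = ‖ofScalars ℂ A n‖ * (r:ℝ)^n := by
    intro n
    rw [ofScalars_norm, norm_mul, norm_pow]
    simp [Complex.norm_real, Real.norm_of_nonneg r.coe_nonneg]
  exact FormalMultilinearSeries.le_radius_of_tendsto _ (hs.norm.congr (fun n => key n))

lemma hf_ball (A : ℕ → ℂ) (f : ℂ → ℂ)
    (hrep : ∀ z ∈ Metric.ball (0 : ℂ) 1, HasSum (fun n : ℕ => A n * z ^ n) (f z)) :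
    HasFPowerSeriesOnBall f (ofScalars ℂ A) 0 1 where
  r_le := radius_ge A f hrep
  r_pos := one_pos
  hasSum := by
    intro y hy
    have hy' : y ∈ Metric.ball (0:ℂ) 1 := by
      simpa [Metric.mem_ball, dist_zero_right, mem_emetric_ball_zero_iff,
        ← ENNReal.coe_one, ENNReal.coe_lt_coe, ← NNReal.coe_lt_coe] using hy
    have := hrep y hy'
    simp only [zero_add, ofScalars_apply_eq, smul_eq_mul]
    exact this

lemma deriv_hasSum (A : ℕ → ℂ) (f : ℂ → ℂ)
    (hrep : ∀ z ∈ Metric.ball (0 : ℂ) 1, HasSum (fun n : ℕ => A n * z ^ n) (f z))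
    {z : ℂ} (hz : z ∈ Metric.ball (0:ℂ) 1) (hz0 : z ≠ 0) :
    HasSum (fun n : ℕ => ((n:ℂ)+1) * A (n+1) * z ^ n) (deriv f z) := by
  have hd := (hf_ball A f hrep).fderiv
  have hz' : z ∈ Metric.eball (0:ℂ) 1 := by
    simpa [Metric.mem_ball, dist_zero_right, mem_emetric_ball_zero_iff,
      ← ENNReal.coe_one, ENNReal.coe_lt_coe, ← NNReal.coe_lt_coe] using hz
  have h1 := hd.hasSum hz'
  rw [zero_add] at h1
  have h2 := h1.mapL (ContinuousLinearMap.apply ℂ ℂ z)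
  simp only [ContinuousLinearMap.apply_apply] at h2
  have h3 : ∀ n : ℕ, ((ofScalars ℂ A).derivSeries n (fun _ => z)) z
      = ((n:ℂ)+1) * A (n+1) * z ^ (n+1) := by
    intro n
    rw [FormalMultilinearSeries.derivSeries_apply_diag, ofScalars_apply_eq]
    simp only [nsmul_eq_mul, smul_eq_mul]
    push_cast
    ring
  simp only [h3] at h2
  have h4 : fderiv ℂ f z z = z * deriv f z := by
    have := (fderiv ℂ f z).map_smul z (1:ℂ)
    simp only [smul_eq_mul, mul_one] at this
    rw [this, deriv]
  rw [h4] at h2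
  have h5 := h2.div_const z
  rw [mul_div_cancel_left₀ _ hz0] at h5
  have e : (fun i : ℕ => ((i:ℂ) + 1) * A (i + 1) * z ^ (i + 1) / z) = fun n : ℕ => ((n:ℂ)+1) * A (n+1) * z ^ n := by
    funext n
    rw [pow_succ, ← mul_assoc, mul_div_cancel_right₀ _ hz0]
  rw [e] at h5
  exact h5

lemma summable_B (A : ℕ → ℂ) (f : ℂ → ℂ)
    (hrep : ∀ z ∈ Metric.ball (0 : ℂ) 1, HasSum (fun n : ℕ => A n * z ^ n) (f z))
    {ρ : ℝ} (h0 : 0 ≤ ρ) (h1 : ρ < 1) :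
    Summable (fun n : ℕ => ((n:ℝ)+1) * ‖A (n+1)‖ * ρ ^ n) := by
  obtain ⟨ρ', hρ'0, hρ'1, hρρ'⟩ : ∃ x : ℝ, 0 < x ∧ x < 1 ∧ ρ < x :=
    ⟨(1+ρ)/2, by linarith, by linarith, by linarith⟩
  obtain ⟨C, hC0, hC⟩ := (ofScalars ℂ A).norm_mul_pow_le_of_lt_radius
    (r := ρ'.toNNReal) (by
      refine lt_of_lt_of_le ?_ (radius_ge A f hrep)
      rw [← ENNReal.coe_one, ENNReal.coe_lt_coe, ← NNReal.coe_lt_coe]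
      simpa [Real.coe_toNNReal _ hρ'0.le] using hρ'1)
  simp only [ofScalars_norm, Real.coe_toNNReal _ hρ'0.le] at hC
  have hq0 : 0 ≤ ρ / ρ' := by positivity
  have hq1 : ρ / ρ' < 1 := (div_lt_one hρ'0).2 hρρ'
  have hsum : Summable (fun n : ℕ => (C/ρ') * (((n:ℝ)+1) * (ρ/ρ')^n)) := by
    apply Summable.mul_left
    have h1' := summable_pow_mul_geometric_of_norm_lt_one 1 (r := ρ/ρ')
      (by rwa [Real.norm_of_nonneg hq0])
    have h2' := summable_geometric_of_lt_one hq0 hq1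
    simpa [add_mul, pow_one] using h1'.add h2'
  apply Summable.of_nonneg_of_le _ _ hsum
  · intro n; positivity
  · intro n
    have hA : ‖A (n+1)‖ ≤ C / ρ' ^ (n+1) := by
      rw [le_div_iff₀ (by positivity)]
      exact hC (n+1)
    have : ((n:ℝ)+1) * ‖A (n+1)‖ * ρ^n ≤ ((n:ℝ)+1) * (C / ρ' ^ (n+1)) * ρ^n := by
      gcongr
    refine this.trans (le_of_eq ?_)
    rw [pow_succ, div_pow]
    field_simp

lemma parseval_bound (A : ℕ → ℂ) (f : ℂ → ℂ)
    (hrep : ∀ z ∈ Metric.ball (0 : ℂ) 1, HasSum (fun n : ℕ => A n * z ^ n) (f z))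
    (hderiv : ∀ z ∈ Metric.ball (0 : ℂ) 1, ‖deriv f z‖ ≤ 1)
    {ρ : ℝ} (h0 : 0 < ρ) (h1 : ρ < 1) (N : ℕ) :
    ∑ n ∈ Finset.range N, (((n:ℝ)+1) * ‖A (n+1)‖ * ρ^n)^2 ≤ 1 := by
  haveI : Fact ((0:ℝ) < 2*Real.pi) := ⟨Real.two_pi_pos⟩
  set B : ℕ → ℂ := fun n => ((n:ℂ)+1) * A (n+1) with hB
  have hBnorm : ∀ n : ℕ, ‖B n‖ = ((n:ℝ)+1) * ‖A (n+1)‖ := by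
    intro n
    have e : ((n:ℂ)+1) = ((n+1 : ℕ) : ℂ) := by push_cast; ring
    rw [hB]
    simp only [norm_mul, e, Complex.norm_natCast]
    push_cast; ring
  set h : ℕ → C(AddCircle (2*π), ℂ) := fun n => (B n * (ρ:ℂ)^n) • fourier (n : ℤ) with hh
  have hnorm : ∀ n, ‖h n‖ = ‖B n‖ * ρ^n := by
    intro n
    rw [hh]
    simp only []
    rw [norm_smul, fourier_norm, mul_one, norm_mul, norm_pow, Complex.norm_real,
      Real.norm_of_nonneg h0.le]
  have hsummable : Summable h := by
    apply Summable.of_norm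
    apply (summable_B A f hrep h0.le h1).congr
    intro n
    rw [hnorm, hBnorm]
  obtain ⟨G, hG⟩ := hsummable
  have hpt : ∀ t : AddCircle (2*π), HasSum (fun n => h n t) (G t) := by
    intro t
    exact hG.mapL (ContinuousMap.evalCLM ℂ t)
  set z : AddCircle (2*π) → ℂ := fun t => (ρ:ℂ) * fourier 1 t with hz
  have hz_norm : ∀ t, ‖z t‖ = ρ := by
    intro t
    rw [hz]
    simp only [norm_mul, Complex.norm_real, Real.norm_of_nonneg h0.le]
    simp [fourier_apply, Circle.norm_coe]
  have hz_mem : ∀ t, z t ∈ Metric.ball (0:ℂ) 1 := by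
    intro t
    simp [Metric.mem_ball, dist_zero_right, hz_norm t, h1]
  have hz_ne : ∀ t, z t ≠ 0 := by
    intro t hzz
    have := hz_norm t
    rw [hzz] at this
    simp at this
    linarith
  have hfour_pow : ∀ (n : ℕ) (t : AddCircle (2*π)), fourier (n : ℤ) t = (fourier 1 t)^n := by
    intro n t
    induction n with
    | zero => simp [fourier_zero]
    | succ k ih =>
      have e : ((k+1 : ℕ) : ℤ) = (k : ℤ) + 1 := by push_cast; ring
      rw [e, fourier_add, ih, pow_succ]
  have hht : ∀ n t, h n t = B n * (z t)^n := by
    intro n t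
    rw [hh]
    simp only [ContinuousMap.coe_smul, Pi.smul_apply, smul_eq_mul]
    rw [hfour_pow n t, hz]
    simp only [mul_pow]
    ring
  have hGt : ∀ t, G t = deriv f (z t) := by
    intro t
    have hthis := hpt t
    simp only [hht] at hthis
    exact hthis.unique (deriv_hasSum A f hrep (hz_mem t) (hz_ne t))
  have hGle : ∀ t, ‖G t‖ ≤ 1 := fun t => (hGt t) ▸ hderiv _ (hz_mem t)
  -- Fourier coefficients of G
  have hcoeff : ∀ k : ℕ, fourierCoeff (⇑G) (k : ℤ) = B k * (ρ:ℂ)^k := by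
    intro k
    set Φ : C(AddCircle (2*π), ℂ) →L[ℂ] ℂ :=
      (innerSL ℂ (fourierLp 2 (k:ℤ) : Lp ℂ 2 (@haarAddCircle (2*π) _))).comp
        (ContinuousMap.toLp 2 haarAddCircle ℂ) with hΦ
    have hΦ_eq : ∀ u : C(AddCircle (2*π), ℂ), Φ u = fourierCoeff (⇑u) (k : ℤ) := by
      intro u
      rw [hΦ]
      simp only [ContinuousLinearMap.comp_apply, innerSL_apply_apply]
      have h1'' := fourierBasis.repr_apply_apply ((ContinuousMap.toLp 2 haarAddCircle ℂ) u) (k:ℤ)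
      rw [coe_fourierBasis] at h1''
      rw [← h1'', fourierBasis_repr, fourierCoeff_toLp]
    have hΦh : ∀ n : ℕ, Φ (h n) = (if n = k then B k * (ρ:ℂ)^k else 0) := by
      intro n
      rw [hh]
      simp only []
      rw [_root_.map_smul]
      have e1 : (ContinuousMap.toLp 2 haarAddCircle ℂ) (fourier (n:ℤ)) = (fourierLp 2 (n:ℤ) : Lp ℂ 2 (@haarAddCircle (2*π) _)) := rfl
      have e2 : fourierBasis.repr (fourierLp 2 (n:ℤ) : Lp ℂ 2 (@haarAddCircle (2*π) _)) = lp.single 2 (n:ℤ) 1 := by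
        rw [← congrFun coe_fourierBasis (n:ℤ)]
        exact fourierBasis.repr_self (n:ℤ)
      have e3 : Φ (fourier (n:ℤ)) = ((lp.single 2 (n:ℤ) (1:ℂ) : lp (fun _ : ℤ => ℂ) 2)) (k:ℤ) := by
        rw [hΦ]
        simp only [ContinuousLinearMap.comp_apply, innerSL_apply_apply, e1]
        have h1'' := fourierBasis.repr_apply_apply (fourierLp 2 (n:ℤ) : Lp ℂ 2 (@haarAddCircle (2*π) _)) (k:ℤ)
        rw [coe_fourierBasis] at h1''
        rw [← h1'', e2]
      rw [e3]
      by_cases hnk : n = k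
      · subst hnk
        simp [lp.single_apply, smul_eq_mul]
      · have : (k:ℤ) ≠ (n:ℤ) := by exact_mod_cast (Ne.symm hnk)
        simp [lp.single_apply, this, hnk]
    have hsum2 := hG.mapL Φ
    simp only [hΦh] at hsum2
    have := (hasSum_ite_eq k (B k * (ρ:ℂ)^k)).unique hsum2
    rw [← hΦ_eq G, ← this]
  -- Parseval
  set F := (ContinuousMap.toLp (E := ℂ) 2 haarAddCircle ℂ) G with hF
  have hpars := tsum_sq_fourierCoeff F
  have hFcoeff : ∀ m : ℤ, fourierCoeff (F : AddCircle (2*π) → ℂ) m = fourierCoeff (⇑G) m :=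
    fun m => fourierCoeff_toLp G m
  have hint : (∫ t, ‖(F : AddCircle (2*π) → ℂ) t‖^2 ∂haarAddCircle) ≤ 1 := by
    have hae : (F : AddCircle (2*π) → ℂ) =ᵐ[haarAddCircle] ⇑G :=
      ContinuousMap.coeFn_toLp (E := ℂ) (p := 2) haarAddCircle (𝕜 := ℂ) G
    have hcongr : (∫ t, ‖(F : AddCircle (2*π) → ℂ) t‖^2 ∂haarAddCircle)
        = ∫ t, ‖G t‖^2 ∂haarAddCircle :=
      integral_congr_ae (hae.mono fun t ht => by simp only [ht])
    rw [hcongr]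
    have hcont : Continuous (fun t : AddCircle (2*π) => ‖G t‖^2) := by
      exact (G.continuous.norm).pow 2
    have hint2 : Integrable (fun t : AddCircle (2*π) => ‖G t‖^2) haarAddCircle := by
      apply Integrable.mono' (integrable_const (1:ℝ)) hcont.aestronglyMeasurable
      refine Filter.Eventually.of_forall fun t => ?_
      rw [Real.norm_of_nonneg (by positivity)]
      nlinarith [hGle t, norm_nonneg (G t)]
    calc (∫ t, ‖G t‖^2 ∂haarAddCircle) ≤ ∫ _, (1:ℝ) ∂haarAddCircle :=
          integral_mono hint2 (integrable_const 1)
            (fun t => by nlinarith [hGle t, norm_nonneg (G t)])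
      _ = 1 := by simp
  have hsq_sum : Summable (fun m : ℤ => ‖fourierCoeff (F : AddCircle (2*π) → ℂ) m‖^2) := by
    have h2' := (lp.memℓp (fourierBasis.repr F)).summable (by norm_num)
    apply h2'.congr
    intro m
    rw [fourierBasis_repr]
    norm_num
  have key : (∑ n ∈ Finset.range N, ‖fourierCoeff (F : AddCircle (2*π) → ℂ) ((n:ℕ):ℤ)‖^2) ≤ 1 := by
    have emb : Function.Injective (fun n : ℕ => (n : ℤ)) := fun a b hab => Int.natCast_inj.mp hab
    calc (∑ n ∈ Finset.range N, ‖fourierCoeff (F : AddCircle (2*π) → ℂ) ((n:ℕ):ℤ)‖^2)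
        = ∑ m ∈ (Finset.range N).map ⟨fun n : ℕ => (n:ℤ), emb⟩,
            ‖fourierCoeff (F : AddCircle (2*π) → ℂ) m‖^2 := by rw [Finset.sum_map]; rfl
      _ ≤ ∑' m : ℤ, ‖fourierCoeff (F : AddCircle (2*π) → ℂ) m‖^2 :=
          Summable.sum_le_tsum _ (fun m _ => by positivity) hsq_sum
      _ = _ := hpars
      _ ≤ 1 := hint
  refine le_trans (le_of_eq ?_) key
  apply Finset.sum_congr rfl
  intro n _
  rw [hFcoeff, hcoeff n, norm_mul, norm_pow, Complex.norm_real,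
    Real.norm_of_nonneg h0.le, hBnorm]

set_option maxHeartbeats 2000000 in
lemma numeric_bound (r : ℝ) (hr0 : 0 ≤ r) (hr1 : r ≤ 0.872664) :
    ∑' n : ℕ, (r^(n+1)/((n:ℝ)+1))^2 ≤ 1 := by
  set c : ℝ := (0.872664:ℝ)^2 with hc
  have hc0 : 0 ≤ c := by positivity
  have hc1 : c < 1 := by rw [hc]; norm_num
  have hxc : r^2 ≤ c := by
    rw [hc]
    exact pow_le_pow_left₀ hr0 hr1 2
  have hterm : ∀ n : ℕ, (r^(n+1)/((n:ℝ)+1))^2 ≤ c^(n+1)/(((n:ℝ)+1))^2 := by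
    intro n
    rw [div_pow, ← pow_mul, mul_comm (n+1) 2, pow_mul]
    gcongr
  have hs1 : Summable (fun n : ℕ => c^(n+1)/(((n:ℝ)+1))^2) := by
    have hg : Summable (fun n : ℕ => c * c^n) :=
      (summable_geometric_of_lt_one hc0 hc1).mul_left c
    refine Summable.of_nonneg_of_le (fun n => by positivity) (fun n => ?_) hg
    calc c^(n+1)/(((n:ℝ)+1))^2 ≤ c^(n+1) :=
          div_le_self (by positivity) (by nlinarith [Nat.cast_nonneg (α := ℝ) n])
      _ = c * c^n := by rw [pow_succ]; ring
  have hsr : Summable (fun n : ℕ => (r^(n+1)/((n:ℝ)+1))^2) :=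
    Summable.of_nonneg_of_le (fun n => by positivity) hterm hs1
  have h1 : ∑' n : ℕ, (r^(n+1)/((n:ℝ)+1))^2 ≤ ∑' n : ℕ, c^(n+1)/(((n:ℝ)+1))^2 :=
    Summable.tsum_le_tsum hterm hsr hs1
  refine h1.trans ?_
  have hsplit := Summable.sum_add_tsum_nat_add (f := fun n : ℕ => c^(n+1)/(((n:ℝ)+1))^2) 35 hs1
  rw [← hsplit]
  have hshift : Summable (fun n : ℕ => c^(n+35+1)/((((n+35:ℕ)):ℝ)+1)^2) :=
    (summable_nat_add_iff 35).2 hs1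
  have htail : (∑' n : ℕ, c^(n+35+1)/((((n+35:ℕ)):ℝ)+1)^2) ≤ c^36/36^2 * (1-c)⁻¹ := by
    have hb : ∀ n : ℕ, c^(n+35+1)/((((n+35:ℕ)):ℝ)+1)^2 ≤ (c^36/36^2) * c^n := by
      intro n
      push_cast
      have hden : (36:ℝ)^2 ≤ ((n:ℝ)+35+1)^2 := by nlinarith [Nat.cast_nonneg (α := ℝ) n]
      calc c^(n+35+1)/((n:ℝ)+35+1)^2 ≤ c^(n+35+1)/(36:ℝ)^2 := by gcongr
        _ = c^36/36^2*c^n := by rw [show n+35+1 = 36+n from by ring, pow_add]; ring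
    calc (∑' n : ℕ, c^(n+35+1)/((((n+35:ℕ)):ℝ)+1)^2)
        ≤ ∑' n : ℕ, (c^36/36^2) * c^n :=
          Summable.tsum_le_tsum hb hshift ((summable_geometric_of_lt_one hc0 hc1).mul_left _)
      _ = (c^36/36^2) * (1-c)⁻¹ := by
          rw [tsum_mul_left, tsum_geometric_of_lt_one hc0 hc1]
  have hmain : (∑ i ∈ Finset.range 35, c^(i+1)/(((i:ℝ)+1))^2) + c^36/36^2 * (1-c)⁻¹ ≤ 1 := by
    rw [hc]
    simp only [Finset.sum_range_succ, Finset.sum_range_zero]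
    norm_num
  linarith [htail, hmain]

lemma coeff_sq_bound (A : ℕ → ℂ) (f : ℂ → ℂ)
    (hrep : ∀ z ∈ Metric.ball (0 : ℂ) 1, HasSum (fun n : ℕ => A n * z ^ n) (f z))
    (hderiv : ∀ z ∈ Metric.ball (0 : ℂ) 1, ‖deriv f z‖ ≤ 1) (N : ℕ) :
    ∑ n ∈ Finset.range N, (((n:ℝ)+1) * ‖A (n+1)‖)^2 ≤ 1 := by
  have htend : Tendsto (fun ρ : ℝ => ∑ n ∈ Finset.range N, (((n:ℝ)+1) * ‖A (n+1)‖ * ρ^n)^2)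
      (𝓝[<] (1:ℝ)) (𝓝 (∑ n ∈ Finset.range N, (((n:ℝ)+1) * ‖A (n+1)‖ * (1:ℝ)^n)^2)) := by
    apply Tendsto.mono_left _ nhdsWithin_le_nhds
    exact Continuous.tendsto (by continuity) 1
  have hev : ∀ᶠ ρ in 𝓝[<] (1:ℝ),
      (∑ n ∈ Finset.range N, (((n:ℝ)+1) * ‖A (n+1)‖ * ρ^n)^2) ≤ 1 := by
    have h0' : ∀ᶠ ρ in 𝓝[<] (1:ℝ), (0:ℝ) < ρ :=
      Filter.Eventually.filter_mono nhdsWithin_le_nhds (eventually_gt_nhds (by norm_num))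
    have h1' : ∀ᶠ ρ in 𝓝[<] (1:ℝ), ρ < 1 := eventually_mem_nhdsWithin
    filter_upwards [h0', h1'] with ρ hρ0 hρ1
    exact parseval_bound A f hrep hderiv hρ0 hρ1 N
  have := le_of_tendsto htend hev
  simpa using this

lemma partial_bound (A : ℕ → ℂ) (f : ℂ → ℂ)
    (hrep : ∀ z ∈ Metric.ball (0 : ℂ) 1, HasSum (fun n : ℕ => A n * z ^ n) (f z))
    (hderiv : ∀ z ∈ Metric.ball (0 : ℂ) 1, ‖deriv f z‖ ≤ 1)
    (r : ℝ) (hr0 : 0 ≤ r) (hr1 : r ≤ 0.872664) (N : ℕ) :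
    ∑ n ∈ Finset.range N, ‖A (n+1)‖ * r^(n+1) ≤ 1 := by
  have hrlt1 : r < 1 := lt_of_le_of_lt hr1 (by norm_num)
  set S := ∑ n ∈ Finset.range N, ‖A (n+1)‖ * r^(n+1) with hS
  have hS0 : 0 ≤ S := Finset.sum_nonneg fun n _ => by positivity
  -- Cauchy-Schwarz
  have hcs := Finset.sum_mul_sq_le_sq_mul_sq (Finset.range N)
    (fun n => ((n:ℝ)+1) * ‖A (n+1)‖) (fun n => r^(n+1)/((n:ℝ)+1))
  have hfg : ∀ n : ℕ, (((n:ℝ)+1) * ‖A (n+1)‖) * (r^(n+1)/((n:ℝ)+1)) = ‖A (n+1)‖ * r^(n+1) := by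
    intro n
    have hne : ((n:ℝ)+1) ≠ 0 := by positivity
    field_simp
  rw [Finset.sum_congr rfl (fun n _ => hfg n)] at hcs
  have h1 : ∑ n ∈ Finset.range N, (((n:ℝ)+1) * ‖A (n+1)‖)^2 ≤ 1 :=
    coeff_sq_bound A f hrep hderiv N
  have hsumg : Summable (fun n : ℕ => (r^(n+1)/((n:ℝ)+1))^2) := by
    have hg : Summable (fun n : ℕ => (r^2) * (r^2)^n) := by
      refine Summable.mul_left _ (summable_geometric_of_lt_one (by positivity) ?_)
      nlinarith
    refine Summable.of_nonneg_of_le (fun n => by positivity) (fun n => ?_) hg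
    calc (r^(n+1)/((n:ℝ)+1))^2 = (r^(n+1))^2/(((n:ℝ)+1))^2 := by rw [div_pow]
      _ ≤ (r^(n+1))^2 :=
          div_le_self (by positivity) (by nlinarith [Nat.cast_nonneg (α := ℝ) n])
      _ = r^2 * (r^2)^n := by
          rw [← pow_mul, ← pow_mul, ← pow_add]
          congr 1
          ring
  have h2 : ∑ n ∈ Finset.range N, (r^(n+1)/((n:ℝ)+1))^2 ≤ 1 := by
    refine le_trans (Summable.sum_le_tsum _ (fun n _ => by positivity) hsumg) ?_
    exact numeric_bound r hr0 hr1
  have hg0 : (0:ℝ) ≤ ∑ n ∈ Finset.range N, (r^(n+1)/((n:ℝ)+1))^2 :=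
    Finset.sum_nonneg fun n _ => by positivity
  have hf0' : (0:ℝ) ≤ ∑ n ∈ Finset.range N, (((n:ℝ)+1) * ‖A (n+1)‖)^2 :=
    Finset.sum_nonneg fun n _ => by positivity
  have hS2 : S^2 ≤ 1 := by nlinarith
  nlinarith

end
end BohrAux

theorem bohr_radius_derivative_identity_lower_bound
    (f : ℂ → ℂ) (A : ℕ → ℂ)
    (hrep : ∀ z ∈ Metric.ball (0 : ℂ) 1, HasSum (fun n : ℕ => A n * z ^ n) (f z))
    (hA0 : A 0 = 0) (hf0 : f 0 = 0)
    (hderiv : ∀ z ∈ Metric.ball (0 : ℂ) 1, ‖deriv f z‖ ≤ 1)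
    (r : ℝ) (hr0 : 0 ≤ r) (hr1 : r ≤ 0.872664) :
    Summable (fun n : ℕ => ‖A n‖ * r ^ n) ∧ ∑' n : ℕ, ‖A n‖ * r ^ n ≤ 1 := by
  have hpartial : ∀ N : ℕ, ∑ k ∈ Finset.range N, ‖A k‖ * r^k ≤ 1 := by
    intro N
    cases N with
    | zero => simp
    | succ M =>
      rw [Finset.sum_range_succ']
      simp only [hA0, norm_zero, zero_mul, add_zero, pow_zero]
      exact partial_bound A f hrep hderiv r hr0 hr1 M
  have hnonneg : ∀ n : ℕ, 0 ≤ ‖A n‖ * r^n := fun n => by positivity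
  have hsummable : Summable (fun n : ℕ => ‖A n‖ * r^n) :=
    summable_of_sum_range_le hnonneg hpartial
  exact ⟨hsummable, Summable.tsum_le_of_sum_range_le hsummable hpartial⟩
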